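/- For every real number t ≤ 0, 1 + e^t·(e^{t+1} − 1 + t + t² − e·(1 + t + t²)) ≥ 0. -/

import Mathlib

open Real

noncomputable def hAux (t : ℝ) : ℝ :=
  Real.exp (-t) + Real.exp (t + 1) - (1 + Real.exp 1) - (Real.exp 1 - 1) * (t + t ^ 2)

noncomputable def hAux1 (t : ℝ) : ℝ :=
  -Real.exp (-t) + Real.exp (t + 1) - (Real.exp 1 - 1) * (1 + 2 * t)

noncomputable def hAux2 (t : ℝ) : ℝ :=
  Real.exp (-t) + Real.exp (t + 1) - 2 * (Real.exp 1 - 1)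

noncomputable def hAux3 (t : ℝ) : ℝ :=
  -Real.exp (-t) + Real.exp (t + 1)

lemma expNegDeriv (t : ℝ) : HasDerivAt (fun x : ℝ => Real.exp (-x)) (-Real.exp (-t)) t := by
  simpa [Function.comp_def] using (Real.hasDerivAt_exp (-t)).comp t (hasDerivAt_neg t)

lemma expAddDeriv (t : ℝ) : HasDerivAt (fun x : ℝ => Real.exp (x + 1)) (Real.exp (t + 1)) t := by
  simpa [Function.comp_def] using (Real.hasDerivAt_exp (t + 1)).comp t
    ((hasDerivAt_id t).add_const 1)

lemma hAux_deriv (t : ℝ) : HasDerivAt hAux (hAux1 t) t := by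
  unfold hAux hAux1
  have := (((expNegDeriv t).add (expAddDeriv t)).sub_const (1 + Real.exp 1)).sub
    ((hasDerivAt_id t |>.add ((hasDerivAt_pow 2 t))).const_mul (Real.exp 1 - 1))
  exact this.congr_deriv (by norm_num)

lemma hAux1_deriv (t : ℝ) : HasDerivAt hAux1 (hAux2 t) t := by
  unfold hAux1 hAux2
  have := (((expNegDeriv t).neg.add (expAddDeriv t))).sub
    (((hasDerivAt_id t).const_mul 2 |>.const_add 1).const_mul (Real.exp 1 - 1))
  exact this.congr_deriv (by ring)

lemma hAux2_deriv (t : ℝ) : HasDerivAt hAux2 (hAux3 t) t := by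
  unfold hAux2 hAux3
  simpa using ((expNegDeriv t).add (expAddDeriv t)).sub_const (2 * (Real.exp 1 - 1))

lemma deriv_hAux1 : deriv hAux1 = hAux2 := funext fun t => (hAux1_deriv t).deriv

lemma hAux_neg_one : hAux (-1) = 0 := by
  unfold hAux
  rw [show (-(-1:ℝ)) = 1 by norm_num, show ((-1:ℝ)+1) = 0 by norm_num, Real.exp_zero]; ring

lemma hAux_zero : hAux 0 = 0 := by
  unfold hAux; norm_num [Real.exp_zero]

lemma hAux1_neg_one : hAux1 (-1) = 0 := by
  unfold hAux1
  rw [show (-(-1:ℝ)) = 1 by norm_num, show ((-1:ℝ)+1) = 0 by norm_num, Real.exp_zero]; ring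

lemma hAux1_neg_half : hAux1 (-(1/2) : ℝ) = 0 := by
  unfold hAux1; norm_num

lemma hAux1_zero : hAux1 0 = 0 := by
  unfold hAux1; rw [neg_zero, Real.exp_zero, zero_add]; ring

lemma e_lt_three : Real.exp 1 < 3 := by
  have := Real.exp_one_lt_d9; linarith

/-- On `Iic (-1)`, `hAux2 ≥ 0`. -/
lemma hAux2_nonneg {t : ℝ} (ht : t ≤ -1) : 0 ≤ hAux2 t := by
  unfold hAux2
  have h1 : Real.exp (-t) = Real.exp 1 * Real.exp (-t - 1) := by
    rw [← Real.exp_add]; ring_nf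
  have h2 : (-t - 1) + 1 ≤ Real.exp (-t - 1) := Real.add_one_le_exp _
  have h3 : (1 : ℝ) + (t + 1) ≤ Real.exp (t + 1) := by
    have := Real.add_one_le_exp (t + 1); linarith
  have he : (1 : ℝ) < Real.exp 1 := by
    have := Real.exp_one_gt_d9; linarith
  have h4 : Real.exp 1 * (1 + (-t - 1)) ≤ Real.exp (-t) := by
    rw [h1]; nlinarith
  have h5 : Real.exp 1 * (-t) + (t + 2) ≤ Real.exp (-t) + Real.exp (t + 1) := by
    nlinarith
  nlinarith [e_lt_three]

/-- `hAux1 ≤ 0` on `Iic (-1)`. -/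
lemma hAux1_nonpos_left {t : ℝ} (ht : t ≤ -1) : hAux1 t ≤ 0 := by
  have hmono : MonotoneOn hAux1 (Set.Iic (-1 : ℝ)) := by
    apply monotoneOn_of_deriv_nonneg (convex_Iic _)
      (fun x _ => (hAux1_deriv x).continuousAt.continuousWithinAt)
      (fun x _ => (hAux1_deriv x).differentiableAt.differentiableWithinAt)
    intro x hx
    rw [interior_Iic] at hx
    rw [(hAux1_deriv x).deriv]
    exact hAux2_nonneg hx.le
  have := hmono ht Set.self_mem_Iic ht
  rwa [hAux1_neg_one] at this

lemma hAux3_nonpos {t : ℝ} (ht : t ≤ -(1/2)) : hAux3 t ≤ 0 := by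
  unfold hAux3
  have : Real.exp (t + 1) ≤ Real.exp (-t) := Real.exp_le_exp.mpr (by linarith)
  linarith

lemma hAux3_nonneg {t : ℝ} (ht : -(1/2) ≤ t) : 0 ≤ hAux3 t := by
  unfold hAux3
  have : Real.exp (-t) ≤ Real.exp (t + 1) := Real.exp_le_exp.mpr (by linarith)
  linarith

/-- `hAux1 ≥ 0` on `Icc (-1) (-1/2)`. -/
lemma hAux1_nonneg_mid {t : ℝ} (h1 : -1 ≤ t) (h2 : t ≤ -(1/2)) : 0 ≤ hAux1 t := by
  have hconc : ConcaveOn ℝ (Set.Icc (-1 : ℝ) (-(1/2))) hAux1 := by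
    apply concaveOn_of_deriv2_nonpos (convex_Icc _ _)
      (fun x _ => (hAux1_deriv x).continuousAt.continuousWithinAt)
      (fun x _ => (hAux1_deriv x).differentiableAt.differentiableWithinAt)
    · rw [deriv_hAux1]
      exact fun x _ => (hAux2_deriv x).differentiableAt.differentiableWithinAt
    · intro x hx
      rw [interior_Icc] at hx
      have : deriv^[2] hAux1 x = hAux3 x := by
        simp only [Function.iterate_succ, Function.iterate_zero, Function.comp_apply, id_eq,
          deriv_hAux1]
        exact (hAux2_deriv x).deriv
      rw [this]
      exact hAux3_nonpos hx.2.le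
  have hmem : t ∈ segment ℝ (-1 : ℝ) (-(1/2)) := by
    rw [segment_eq_Icc (by norm_num)]
    exact ⟨h1, h2⟩
  have := hconc.ge_on_segment (Set.left_mem_Icc.mpr (by norm_num))
    (Set.right_mem_Icc.mpr (by norm_num)) hmem
  rw [hAux1_neg_one, hAux1_neg_half] at this
  simpa using this

/-- `hAux1 ≤ 0` on `Icc (-1/2) 0`. -/
lemma hAux1_nonpos_right {t : ℝ} (h1 : -(1/2) ≤ t) (h2 : t ≤ 0) : hAux1 t ≤ 0 := by
  have hconv : ConvexOn ℝ (Set.Icc (-(1/2) : ℝ) 0) hAux1 := by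
    apply convexOn_of_deriv2_nonneg (convex_Icc _ _)
      (fun x _ => (hAux1_deriv x).continuousAt.continuousWithinAt)
      (fun x _ => (hAux1_deriv x).differentiableAt.differentiableWithinAt)
    · rw [deriv_hAux1]
      exact fun x _ => (hAux2_deriv x).differentiableAt.differentiableWithinAt
    · intro x hx
      rw [interior_Icc] at hx
      have : deriv^[2] hAux1 x = hAux3 x := by
        simp only [Function.iterate_succ, Function.iterate_zero, Function.comp_apply, id_eq,
          deriv_hAux1]
        exact (hAux2_deriv x).deriv
      rw [this]
      exact hAux3_nonneg hx.1.le
  have hmem : t ∈ segment ℝ (-(1/2) : ℝ) 0 := by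
    rw [segment_eq_Icc (by norm_num)]
    exact ⟨h1, h2⟩
  have := hconv.le_on_segment (Set.left_mem_Icc.mpr (by norm_num))
    (Set.right_mem_Icc.mpr (by norm_num)) hmem
  rw [hAux1_neg_half, hAux1_zero] at this
  simpa using this

lemma hAux_nonneg {t : ℝ} (ht : t ≤ 0) : 0 ≤ hAux t := by
  rcases le_or_gt t (-1) with h | h
  · -- hAux antitone on Iic (-1)
    have hanti : AntitoneOn hAux (Set.Iic (-1 : ℝ)) := by
      apply antitoneOn_of_deriv_nonpos (convex_Iic _)
        (fun x _ => (hAux_deriv x).continuousAt.continuousWithinAt)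
        (fun x _ => (hAux_deriv x).differentiableAt.differentiableWithinAt)
      intro x hx
      rw [interior_Iic] at hx
      rw [(hAux_deriv x).deriv]
      exact hAux1_nonpos_left hx.le
    have := hanti h Set.self_mem_Iic h
    rwa [hAux_neg_one] at this
  · rcases le_or_gt t (-(1/2)) with h2 | h2
    · -- hAux monotone on Icc (-1) (-1/2)
      have hmono : MonotoneOn hAux (Set.Icc (-1 : ℝ) (-(1/2))) := by
        apply monotoneOn_of_deriv_nonneg (convex_Icc _ _)
          (fun x _ => (hAux_deriv x).continuousAt.continuousWithinAt)
          (fun x _ => (hAux_deriv x).differentiableAt.differentiableWithinAt)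
        intro x hx
        rw [interior_Icc] at hx
        rw [(hAux_deriv x).deriv]
        exact hAux1_nonneg_mid hx.1.le hx.2.le
      have := hmono (Set.left_mem_Icc.mpr (by norm_num)) ⟨h.le, h2⟩ h.le
      rwa [hAux_neg_one] at this
    · -- hAux antitone on Icc (-1/2) 0
      have hanti : AntitoneOn hAux (Set.Icc (-(1/2) : ℝ) 0) := by
        apply antitoneOn_of_deriv_nonpos (convex_Icc _ _)
          (fun x _ => (hAux_deriv x).continuousAt.continuousWithinAt)
          (fun x _ => (hAux_deriv x).differentiableAt.differentiableWithinAt)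
        intro x hx
        rw [interior_Icc] at hx
        rw [(hAux_deriv x).deriv]
        exact hAux1_nonpos_right hx.1.le hx.2.le
      have := hanti ⟨h2.le, ht⟩ (Set.right_mem_Icc.mpr (by norm_num)) ht
      rwa [hAux_zero] at this

theorem stmt_2 (t : ℝ) (ht : t ≤ 0) :
    1 + Real.exp t * (Real.exp (t + 1) - 1 + t + t ^ 2
      - Real.exp 1 * (1 + t + t ^ 2)) ≥ 0 := by
  have h := hAux_nonneg ht
  have hkey : 1 + Real.exp t * (Real.exp (t + 1) - 1 + t + t ^ 2
      - Real.exp 1 * (1 + t + t ^ 2)) = Real.exp t * hAux t := by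
    unfold hAux
    have : Real.exp t * Real.exp (-t) = 1 := by
      rw [← Real.exp_add]; simp
    nlinarith [this]
  rw [hkey]
  positivity
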